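/- Assume |J| = 1, the travel times τ are continuous and have a differentiable convex potential Φ (τ(x) = ∇Φ(x) on ℱ), all externality factors g_{i,p} are constant, and B ∈ ℝ_{≥0} is a feasible budget. Then the set L(B) = {λ ≥ 0 : there exists x ∈ WE(λ) with G(x) ≤ B} is nonempty, upward closed (if λ ∈ L(B) and λ' ≥ λ then λ' ∈ L(B)), and closed; in particular the minimal price λ* = min L(B) such that some Wardrop equilibrium with respect to c^{λ*} respects B exists. -/

import Mathlib

open Finset

variable {I : Type*} [Fintype I] [DecidableEq I]
  {P : I → Type*} [∀ i, Fintype (P i)] [∀ i, DecidableEq (P i)]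

/-- A flow is feasible if it is nonnegative and satisfies all demands. -/
def Feasible (d : I → ℝ) (x : ∀ i, P i → ℝ) : Prop :=
  (∀ i p, 0 ≤ x i p) ∧ ∀ i, ∑ p, x i p = d i

/-- Wardrop equilibrium with respect to a cost function. -/
def IsWardrop (d : I → ℝ) (c : (∀ i, P i → ℝ) → ∀ i, P i → ℝ)
    (x : ∀ i, P i → ℝ) : Prop :=
  Feasible d x ∧ ∀ i p, 0 < x i p → ∀ q, c x i p ≤ c x i q

/-- Total externality for a single externality class with constant factors `g`. -/
def Gtot (g : ∀ i, P i → ℝ) (x : ∀ i, P i → ℝ) : ℝ :=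
  ∑ i, ∑ p, g i p * x i p

set_option linter.unusedSectionVars false
set_option linter.unusedVariables false

lemma Gtot_add (g a b : ∀ i, P i → ℝ) : Gtot g (a + b) = Gtot g a + Gtot g b := by
  simp [Gtot, mul_add, Finset.sum_add_distrib]

lemma Gtot_smul (g : ∀ i, P i → ℝ) (t : ℝ) (a : ∀ i, P i → ℝ) :
    Gtot g (t • a) = t * Gtot g a := by
  simp [Gtot, Finset.mul_sum]; congr 1; ext i; congr 1; ext p; ring

lemma Gtot_sub (g a b : ∀ i, P i → ℝ) : Gtot g (a - b) = Gtot g a - Gtot g b := by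
  simp [Gtot, mul_sub, Finset.sum_sub_distrib]

lemma Gtot_single (g : ∀ i, P i → ℝ) (i : I) (p : P i) :
    Gtot g (Pi.single i (Pi.single p (1 : ℝ))) = g i p := by
  rw [Gtot, Finset.sum_eq_single i]
  · rw [Finset.sum_eq_single p] <;> simp +contextual [Pi.single_eq_of_ne]
  · intro j _ hj
    rw [Finset.sum_eq_zero]
    intro q _
    simp [Pi.single_eq_of_ne hj]
  · simp

lemma pi_decomp (w : ∀ i, P i → ℝ) :
    ∑ i, ∑ p, w i p • (Pi.single i (Pi.single p (1 : ℝ)) : ∀ j, P j → ℝ) = w := by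
  have : ∀ i : I, ∑ p, w i p • (Pi.single p (1:ℝ) : P i → ℝ) = w i := by
    intro i
    ext q
    simp [Pi.single_apply]
  funext j
  rw [Finset.sum_apply]
  rw [Finset.sum_eq_single j]
  · rw [Finset.sum_apply]
    have := this j
    calc ∑ p, (w j p • (Pi.single j (Pi.single p (1:ℝ)) : ∀ k, P k → ℝ)) j
        = ∑ p, w j p • (Pi.single p (1:ℝ) : P j → ℝ) := by
          refine Finset.sum_congr rfl fun p _ => ?_
          simp
      _ = w j := this
  · intro b _ hb
    rw [Finset.sum_apply, Finset.sum_eq_zero]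
    intro q _
    have : (Pi.single b (Pi.single q (1:ℝ)) : ∀ k, P k → ℝ) j = 0 :=
      Pi.single_eq_of_ne (Ne.symm hb) _
    rw [Pi.smul_apply, this, smul_zero]
  · simp

lemma continuous_Gtot (g : ∀ i, P i → ℝ) : Continuous (Gtot g) := by
  unfold Gtot
  exact continuous_finset_sum _ fun i _ => continuous_finset_sum _ fun p _ =>
    (continuous_const.mul ((continuous_apply p).comp (continuous_apply i)))

lemma feasible_isClosed (d : I → ℝ) : IsClosed {x : ∀ i, P i → ℝ | Feasible d x} := by
  have h1 : IsClosed {x : ∀ i, P i → ℝ | ∀ i p, 0 ≤ x i p} := by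
    have : {x : ∀ i, P i → ℝ | ∀ i p, 0 ≤ x i p} =
        ⋂ i, ⋂ p, {x : ∀ i, P i → ℝ | 0 ≤ x i p} := by
      ext x; simp [Set.mem_iInter]
    rw [this]
    exact isClosed_iInter fun i => isClosed_iInter fun p =>
      isClosed_le continuous_const ((continuous_apply p).comp (continuous_apply i))
  have h2 : IsClosed {x : ∀ i, P i → ℝ | ∀ i, ∑ p, x i p = d i} := by
    have : {x : ∀ i, P i → ℝ | ∀ i, ∑ p, x i p = d i} =
        ⋂ i, {x : ∀ i, P i → ℝ | ∑ p, x i p = d i} := by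
      ext x; simp [Set.mem_iInter]
    rw [this]
    exact isClosed_iInter fun i => isClosed_eq
      (continuous_finset_sum _ fun p _ => (continuous_apply p).comp (continuous_apply i))
      continuous_const
  have : {x : ∀ i, P i → ℝ | Feasible d x} =
      {x | ∀ i p, 0 ≤ x i p} ∩ {x | ∀ i, ∑ p, x i p = d i} := rfl
  rw [this]; exact h1.inter h2

lemma feasible_isCompact (d : I → ℝ) : IsCompact {x : ∀ i, P i → ℝ | Feasible d x} := by
  have hK : IsCompact (Set.pi Set.univ fun i : I =>
      Set.pi Set.univ fun _ : P i => Set.Icc (0:ℝ) (d i)) :=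
    isCompact_univ_pi fun i => isCompact_univ_pi fun _ => isCompact_Icc
  refine hK.of_isClosed_subset (feasible_isClosed d) ?_
  intro x hx
  simp only [Set.mem_pi, Set.mem_univ, forall_true_left, Set.mem_Icc]
  intro i p
  refine ⟨hx.1 i p, ?_⟩
  calc x i p ≤ ∑ q, x i q := Finset.single_le_sum (fun q _ => hx.1 i q) (Finset.mem_univ p)
    _ = d i := hx.2 i

lemma fderiv_decomp {Φ : (∀ i, P i → ℝ) → ℝ} (hΦdiff : Differentiable ℝ Φ)
    {τ : (∀ i, P i → ℝ) → ∀ i, P i → ℝ} {d : I → ℝ} {x : ∀ i, P i → ℝ}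
    (hx : Feasible d x)
    (hΦgrad : ∀ x, Feasible d x →
      ∀ i p, fderiv ℝ Φ x (Pi.single i (Pi.single p (1 : ℝ))) = τ x i p)
    (w : ∀ i, P i → ℝ) :
    fderiv ℝ Φ x w = ∑ i, ∑ p, w i p * τ x i p := by
  conv_lhs => rw [← pi_decomp w]
  rw [map_sum]
  refine Finset.sum_congr rfl fun i _ => ?_
  rw [map_sum]
  refine Finset.sum_congr rfl fun p _ => ?_
  rw [map_smul, hΦgrad x hx i p, smul_eq_mul]

lemma hasDerivAt_line {Φ : (∀ i, P i → ℝ) → ℝ} (hΦdiff : Differentiable ℝ Φ)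
    (g : ∀ i, P i → ℝ) (lam : ℝ) (x w : ∀ i, P i → ℝ) :
    HasDerivAt (fun t : ℝ => Φ (x + t • w) + lam * Gtot g (x + t • w))
      (fderiv ℝ Φ x w + lam * Gtot g w) 0 := by
  have h1 : HasDerivAt (fun t : ℝ => x + t • w) w 0 := by
    simpa using ((hasDerivAt_id (0:ℝ)).smul_const w).const_add x
  have h2 : HasDerivAt (fun t : ℝ => Φ (x + t • w)) (fderiv ℝ Φ x w) 0 := by
    have := (hΦdiff (x + (0:ℝ) • w)).hasFDerivAt.comp_hasDerivAt 0 h1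
    simpa [Function.comp_def] using this
  have h3 : HasDerivAt (fun t : ℝ => lam * Gtot g (x + t • w)) (lam * Gtot g w) 0 := by
    have heq : (fun t : ℝ => lam * Gtot g (x + t • w)) =
        fun t : ℝ => lam * Gtot g x + lam * Gtot g w * t := by
      funext t
      rw [Gtot_add, Gtot_smul]; ring
    rw [heq]
    simpa using ((hasDerivAt_id (0:ℝ)).const_mul (lam * Gtot g w)).const_add (lam * Gtot g x)
  exact h2.add h3

lemma cost_le_of_min_segment {Φ : (∀ i, P i → ℝ) → ℝ} (hΦdiff : Differentiable ℝ Φ)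
    {τ : (∀ i, P i → ℝ) → ∀ i, P i → ℝ} {d : I → ℝ}
    (hΦgrad : ∀ x, Feasible d x →
      ∀ i p, fderiv ℝ Φ x (Pi.single i (Pi.single p (1 : ℝ))) = τ x i p)
    (g : ∀ i, P i → ℝ) (lam : ℝ) {x : ∀ i, P i → ℝ} (hx : Feasible d x)
    {i : I} {p q : P i} (hp : 0 < x i p)
    (hmin : ∀ t ∈ Set.Ioc (0:ℝ) (x i p),
      Φ x + lam * Gtot g x ≤
        Φ (x + t • ((Pi.single i (Pi.single q (1:ℝ)) : ∀ j, P j → ℝ)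
            - Pi.single i (Pi.single p (1:ℝ)))) +
          lam * Gtot g (x + t • ((Pi.single i (Pi.single q (1:ℝ)) : ∀ j, P j → ℝ)
            - Pi.single i (Pi.single p (1:ℝ))))) :
    τ x i p + lam * g i p ≤ τ x i q + lam * g i q := by
  set w : ∀ j, P j → ℝ := (Pi.single i (Pi.single q (1:ℝ)) : ∀ j, P j → ℝ)
      - Pi.single i (Pi.single p (1:ℝ)) with hw
  set φ : ℝ → ℝ := fun t => Φ (x + t • w) + lam * Gtot g (x + t • w) with hφ
  have hD : HasDerivAt φ (fderiv ℝ Φ x w + lam * Gtot g w) 0 :=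
    hasDerivAt_line hΦdiff g lam x w
  have hDval : fderiv ℝ Φ x w + lam * Gtot g w =
      (τ x i q + lam * g i q) - (τ x i p + lam * g i p) := by
    rw [hw, map_sub, hΦgrad x hx i q, hΦgrad x hx i p, Gtot_sub, Gtot_single, Gtot_single]
    ring
  rw [hDval] at hD
  have hφ0 : φ 0 = Φ x + lam * Gtot g x := by simp [hφ]
  have hslope : ∀ t ∈ Set.Ioc (0:ℝ) (x i p), 0 ≤ slope φ 0 t := by
    intro t ht
    rw [slope_def_field]
    have := hmin t ht
    rw [← hφ0] at this
    have h1 : 0 ≤ φ t - φ 0 := by simpa [hφ] using this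
    rw [div_eq_mul_inv]
    have : (0:ℝ) < t - 0 := by simpa using ht.1
    positivity
  have htend : Filter.Tendsto (slope φ 0) (nhdsWithin 0 (Set.Ioi 0))
      (nhds ((τ x i q + lam * g i q) - (τ x i p + lam * g i p))) := by
    refine (hasDerivAt_iff_tendsto_slope.mp hD).mono_left (nhdsWithin_mono 0 ?_)
    intro t ht
    exact ne_of_gt ht
  have hmem : Set.Ioc (0:ℝ) (x i p) ∈ nhdsWithin (0:ℝ) (Set.Ioi 0) :=
    Ioc_mem_nhdsGT_of_mem ⟨le_refl 0, hp⟩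
  have h0le : 0 ≤ (τ x i q + lam * g i q) - (τ x i p + lam * g i p) :=
    ge_of_tendsto htend (Filter.eventually_of_mem hmem hslope)
  linarith

/-- Direction moving mass from path `p` to path `q` of commodity `i`. -/
def dir (i : I) (p q : P i) : ∀ j, P j → ℝ :=
  (Pi.single i (Pi.single q (1:ℝ)) : ∀ j, P j → ℝ) - Pi.single i (Pi.single p (1:ℝ))

lemma dir_apply_ne {i : I} {p q : P i} {j : I} (hj : j ≠ i) : dir i p q j = 0 := by
  simp [dir, Pi.single_eq_of_ne hj]

lemma dir_apply_self (i : I) (p q : P i) : dir i p q i =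
    (Pi.single q (1:ℝ) : P i → ℝ) - Pi.single p (1:ℝ) := by
  simp [dir]

lemma sum_dir (i : I) (p q : P i) : ∑ r, dir i p q i r = 0 := by
  rw [dir_apply_self]
  simp [Pi.single_apply, Finset.sum_ite_eq', Finset.sum_sub_distrib]

lemma feasible_add_smul_dir {d : I → ℝ} {x : ∀ i, P i → ℝ} (hx : Feasible d x)
    {i : I} {p q : P i} (hpq : p ≠ q) {t : ℝ} (ht : t ∈ Set.Ioc (0:ℝ) (x i p)) :
    Feasible d (x + t • dir i p q) := by
  constructor
  · intro j r
    by_cases hj : j = i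
    · subst hj
      have : (x + t • dir j p q) j r =
          x j r + t * ((Pi.single q (1:ℝ) : P j → ℝ) r - (Pi.single p (1:ℝ) : P j → ℝ) r) := by
        simp [dir_apply_self]
      rw [this]
      rcases eq_or_ne r p with rfl | hrp
      · rw [Pi.single_eq_of_ne hpq, Pi.single_eq_same]
        have := ht.2; linarith
      · rcases eq_or_ne r q with rfl | hrq
        · rw [Pi.single_eq_same, Pi.single_eq_of_ne hrp]
          have := hx.1 j r; have := ht.1; linarith
        · rw [Pi.single_eq_of_ne hrq, Pi.single_eq_of_ne hrp]
          have := hx.1 j r; linarith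
    · have : (x + t • dir i p q) j r = x j r := by
        simp [dir_apply_ne hj]
      rw [this]; exact hx.1 j r
  · intro j
    by_cases hj : j = i
    · subst hj
      have : ∑ r, (x + t • dir j p q) j r = (∑ r, x j r) + t * ∑ r, dir j p q j r := by
        simp [Finset.sum_add_distrib, Finset.mul_sum]
      rw [this, sum_dir, hx.2 j]; ring
    · have : ∑ r, (x + t • dir i p q) j r = ∑ r, x j r := by
        refine Finset.sum_congr rfl fun r _ => ?_
        simp [dir_apply_ne hj]
      rw [this, hx.2 j]

lemma isWardrop_of_min {Φ : (∀ i, P i → ℝ) → ℝ} (hΦdiff : Differentiable ℝ Φ)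
    {τ : (∀ i, P i → ℝ) → ∀ i, P i → ℝ} {d : I → ℝ}
    (hΦgrad : ∀ x, Feasible d x →
      ∀ i p, fderiv ℝ Φ x (Pi.single i (Pi.single p (1 : ℝ))) = τ x i p)
    (g : ∀ i, P i → ℝ) (lam : ℝ) {x : ∀ i, P i → ℝ} (hx : Feasible d x)
    (hmin : ∀ y, Feasible d y → Φ x + lam * Gtot g x ≤ Φ y + lam * Gtot g y) :
    IsWardrop d (fun y i p => τ y i p + lam * g i p) x := by
  refine ⟨hx, fun i p hp q => ?_⟩
  rcases eq_or_ne p q with rfl | hpq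
  · exact le_refl _
  · refine cost_le_of_min_segment hΦdiff hΦgrad g lam hx hp ?_
    intro t ht
    exact hmin _ (feasible_add_smul_dir hx hpq ht)

lemma min_of_isWardrop {Φ : (∀ i, P i → ℝ) → ℝ} (hΦdiff : Differentiable ℝ Φ)
    (hΦconv : ConvexOn ℝ Set.univ Φ)
    {τ : (∀ i, P i → ℝ) → ∀ i, P i → ℝ} {d : I → ℝ} (hd : ∀ i, 0 < d i)
    (hΦgrad : ∀ x, Feasible d x →
      ∀ i p, fderiv ℝ Φ x (Pi.single i (Pi.single p (1 : ℝ))) = τ x i p)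
    (g : ∀ i, P i → ℝ) (lam : ℝ) {x : ∀ i, P i → ℝ}
    (hW : IsWardrop d (fun y i p => τ y i p + lam * g i p) x) :
    ∀ y, Feasible d y → Φ x + lam * Gtot g x ≤ Φ y + lam * Gtot g y := by
  intro y hy
  have hx : Feasible d x := hW.1
  set w : ∀ i, P i → ℝ := y - x with hwdef
  set D : ℝ := fderiv ℝ Φ x w + lam * Gtot g w with hDdef
  have hD : HasDerivAt (fun t : ℝ => Φ (x + t • w) + lam * Gtot g (x + t • w)) D 0 :=
    hasDerivAt_line hΦdiff g lam x w
  -- D as a sum of costs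
  have hDsum : D = ∑ i, ∑ p, w i p * (τ x i p + lam * g i p) := by
    rw [hDdef, fderiv_decomp hΦdiff hx hΦgrad w, Gtot, Finset.mul_sum,
      ← Finset.sum_add_distrib]
    refine Finset.sum_congr rfl fun i _ => ?_
    rw [Finset.mul_sum, ← Finset.sum_add_distrib]
    refine Finset.sum_congr rfl fun p _ => ?_
    ring
  -- D is nonnegative by the Wardrop property
  have hDnonneg : 0 ≤ D := by
    rw [hDsum]
    refine Finset.sum_nonneg fun i _ => ?_
    obtain ⟨p0, hp0⟩ : ∃ p, 0 < x i p := by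
      by_contra h
      push_neg at h
      have h0 : ∑ p, x i p ≤ 0 := Finset.sum_nonpos fun p _ => h p
      rw [hx.2 i] at h0
      exact absurd h0 (not_le.mpr (hd i))
    set c : P i → ℝ := fun p => τ x i p + lam * g i p with hc
    have hcmin : ∀ q, c p0 ≤ c q := fun q => hW.2 i p0 hp0 q
    have hxc : ∑ p, x i p * c p = c p0 * d i := by
      have : ∀ p ∈ Finset.univ, x i p * c p = x i p * c p0 := by
        intro p _
        rcases eq_or_lt_of_le (hx.1 i p) with h0 | hpos
        · rw [← h0]; ring
        · have h1 : c p ≤ c p0 := hW.2 i p hpos p0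
          have h2 : c p0 ≤ c p := hcmin p
          rw [le_antisymm h1 h2]
      rw [Finset.sum_congr rfl this, ← Finset.sum_mul, hx.2 i]
      ring
    have hyc : c p0 * d i ≤ ∑ p, y i p * c p := by
      have : ∀ p ∈ Finset.univ, y i p * c p0 ≤ y i p * c p := fun p _ =>
        mul_le_mul_of_nonneg_left (hcmin p) (hy.1 i p)
      calc c p0 * d i = ∑ p, y i p * c p0 := by rw [← Finset.sum_mul, hy.2 i]; ring
        _ ≤ ∑ p, y i p * c p := Finset.sum_le_sum this
    have : ∑ p, w i p * c p = (∑ p, y i p * c p) - ∑ p, x i p * c p := by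
      rw [← Finset.sum_sub_distrib]
      refine Finset.sum_congr rfl fun p _ => ?_
      rw [hwdef]
      simp [sub_mul]
    rw [this, hxc]
    linarith
  -- convexity of the potential plus linear part
  have hGconv : ConvexOn ℝ Set.univ fun z => lam * Gtot g z := by
    refine ⟨convex_univ, fun a _ b _ s t hs ht hst => ?_⟩
    show lam * Gtot g (s • a + t • b) ≤ s • (lam * Gtot g a) + t • (lam * Gtot g b)
    rw [Gtot_add, Gtot_smul, Gtot_smul]
    simp only [smul_eq_mul]
    ring_nf
    exact le_refl _
  have hΨconv : ConvexOn ℝ Set.univ fun z => Φ z + lam * Gtot g z := hΦconv.add hGconv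
  -- slope bound from convexity
  have hslope : ∀ t ∈ Set.Ioc (0:ℝ) 1,
      slope (fun t : ℝ => Φ (x + t • w) + lam * Gtot g (x + t • w)) 0 t ≤
        (Φ y + lam * Gtot g y) - (Φ x + lam * Gtot g x) := by
    intro t ht
    have hcomb : x + t • w = (1 - t) • x + t • y := by
      rw [hwdef]
      rw [smul_sub, sub_smul, one_smul]
      abel
    have := hΨconv.2 (Set.mem_univ x) (Set.mem_univ y) (by linarith [ht.2] : (0:ℝ) ≤ 1 - t)
      (le_of_lt ht.1) (by ring)
    rw [slope_def_field]
    have hval : Φ (x + t • w) + lam * Gtot g (x + t • w) ≤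
        (1 - t) * (Φ x + lam * Gtot g x) + t * (Φ y + lam * Gtot g y) := by
      rw [hcomb]
      simpa [smul_eq_mul] using this
    have hphi0 : Φ (x + (0:ℝ) • w) + lam * Gtot g (x + (0:ℝ) • w) =
        Φ x + lam * Gtot g x := by simp
    rw [sub_zero, div_le_iff₀ ht.1]
    simp only [hphi0]
    nlinarith [ht.1]
  have htend : Filter.Tendsto
      (slope (fun t : ℝ => Φ (x + t • w) + lam * Gtot g (x + t • w)) 0)
      (nhdsWithin 0 (Set.Ioi 0)) (nhds D) := by
    refine (hasDerivAt_iff_tendsto_slope.mp hD).mono_left (nhdsWithin_mono 0 ?_)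
    intro t ht
    exact ne_of_gt ht
  have hmem : Set.Ioc (0:ℝ) 1 ∈ nhdsWithin (0:ℝ) (Set.Ioi 0) :=
    Ioc_mem_nhdsGT_of_mem ⟨le_refl 0, one_pos⟩
  have hDle : D ≤ (Φ y + lam * Gtot g y) - (Φ x + lam * Gtot g x) :=
    le_of_tendsto htend (Filter.eventually_of_mem hmem hslope)
  linarith

/-- for a single externality class, continuous travel times with a
differentiable convex potential, constant externality factors and a feasible budget `B`,
the set `L(B) = {λ ≥ 0 : ∃ x ∈ WE(λ), G(x) ≤ B}` is nonempty, upward closed, and closed;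
in particular it has a least element `λ*`. -/
theorem price_set_respecting_budget_nonempty_upclosed_closed
    [∀ i, Nonempty (P i)]
    (d : I → ℝ) (hd : ∀ i, 0 < d i)
    (τ : (∀ i, P i → ℝ) → ∀ i, P i → ℝ)
    (hτ : ∀ i p, ContinuousOn (fun x => τ x i p) {x | Feasible d x})
    (Φ : (∀ i, P i → ℝ) → ℝ)
    (hΦdiff : Differentiable ℝ Φ) (hΦconv : ConvexOn ℝ Set.univ Φ)
    (hΦgrad : ∀ x, Feasible d x →
      ∀ i p, fderiv ℝ Φ x (Pi.single i (Pi.single p (1 : ℝ))) = τ x i p)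
    (g : ∀ i, P i → ℝ) (hg : ∀ i p, 0 ≤ g i p)
    (B : ℝ) (hB : 0 ≤ B)
    (hBfeas : ∃ x, Feasible d x ∧ Gtot g x ≤ B) :
    Set.Nonempty {lam : ℝ | 0 ≤ lam ∧
        ∃ x, IsWardrop d (fun y i p => τ y i p + lam * g i p) x ∧ Gtot g x ≤ B} ∧
    (∀ lam ∈ {lam : ℝ | 0 ≤ lam ∧
        ∃ x, IsWardrop d (fun y i p => τ y i p + lam * g i p) x ∧ Gtot g x ≤ B},
      ∀ lam' : ℝ, lam ≤ lam' →
        lam' ∈ {lam : ℝ | 0 ≤ lam ∧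
          ∃ x, IsWardrop d (fun y i p => τ y i p + lam * g i p) x ∧ Gtot g x ≤ B}) ∧
    IsClosed {lam : ℝ | 0 ≤ lam ∧
        ∃ x, IsWardrop d (fun y i p => τ y i p + lam * g i p) x ∧ Gtot g x ≤ B} ∧
    ∃ lamStar : ℝ, IsLeast {lam : ℝ | 0 ≤ lam ∧
        ∃ x, IsWardrop d (fun y i p => τ y i p + lam * g i p) x ∧ Gtot g x ≤ B} lamStar := by
  have hFc : IsCompact {x : ∀ i, P i → ℝ | Feasible d x} := feasible_isCompact d
  have hΦcont : Continuous Φ := hΦdiff.continuous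
  have hΨcont : ∀ lam : ℝ, Continuous fun z : ∀ i, P i → ℝ => Φ z + lam * Gtot g z :=
    fun lam => hΦcont.add (continuous_const.mul (continuous_Gtot g))
  -- Nonemptiness
  have hmain : Set.Nonempty {lam : ℝ | 0 ≤ lam ∧
      ∃ x, IsWardrop d (fun y i p => τ y i p + lam * g i p) x ∧ Gtot g x ≤ B} := by
    have h : ∀ i, ∃ p0 : P i, ∀ q, g i p0 ≤ g i q := fun i => by
      obtain ⟨b, _, hb⟩ := Finset.exists_min_image Finset.univ (g i)
        ⟨Classical.arbitrary _, Finset.mem_univ _⟩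
      exact ⟨b, fun q => hb q (Finset.mem_univ q)⟩
    choose pm hpm using h
    set S : Set (∀ i, P i → ℝ) :=
      {x | Feasible d x ∧ ∀ i p, x i p ≠ 0 → g i p ≤ g i (pm i)} with hSdef
    have hScl : IsClosed S := by
      have : S = {x : ∀ i, P i → ℝ | Feasible d x} ∩
          ⋂ i, ⋂ p, {x : ∀ i, P i → ℝ | x i p ≠ 0 → g i p ≤ g i (pm i)} := by
        ext x
        simp only [hSdef, Set.mem_setOf_eq, Set.mem_inter_iff, Set.mem_iInter]
      rw [this]
      refine (feasible_isClosed d).inter (isClosed_iInter fun i => isClosed_iInter fun p => ?_)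
      by_cases hgp : g i p ≤ g i (pm i)
      · have : {x : ∀ i, P i → ℝ | x i p ≠ 0 → g i p ≤ g i (pm i)} = Set.univ := by
          ext x; simp [hgp]
        rw [this]; exact isClosed_univ
      · have : {x : ∀ i, P i → ℝ | x i p ≠ 0 → g i p ≤ g i (pm i)} =
            {x : ∀ i, P i → ℝ | x i p = 0} := by
          ext x; simp [hgp]
        rw [this]
        exact isClosed_eq ((continuous_apply p).comp (continuous_apply i)) continuous_const
    have hScomp : IsCompact S :=
      hFc.of_isClosed_subset hScl fun x hx => hx.1
    have hSne : S.Nonempty := by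
      refine ⟨fun i p => if p = pm i then d i else 0, ⟨⟨?_, ?_⟩, ?_⟩⟩
      · intro i p; dsimp only; split <;> [exact (hd i).le; exact le_refl 0]
      · intro i; simp
      · intro i p hp
        dsimp only at hp
        by_cases hppm : p = pm i
        · rw [hppm]
        · simp [hppm] at hp
    obtain ⟨xs, hxsS, hxsmin⟩ := hScomp.exists_isMinOn hSne hΦcont.continuousOn
    have hxsF : Feasible d xs := hxsS.1
    -- choose a big enough price
    set tq : (Σ i : I, P i × P i) → ℝ := fun z =>
      if g z.1 z.2.1 < g z.1 z.2.2 then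
        (τ xs z.1 z.2.1 - τ xs z.1 z.2.2) / (g z.1 z.2.2 - g z.1 z.2.1) else 0 with htq
    obtain ⟨M, hM⟩ := (Set.finite_range tq).bddAbove
    set lam0 : ℝ := max M 0 with hlam0
    have hlam0nn : 0 ≤ lam0 := le_max_right _ _
    have hWxs : IsWardrop d (fun y i p => τ y i p + lam0 * g i p) xs := by
      refine ⟨hxsF, fun i p hp q => ?_⟩
      have hgp : g i p ≤ g i (pm i) := hxsS.2 i p (ne_of_gt hp)
      have hgp' : g i p = g i (pm i) := le_antisymm hgp (hpm i p)
      by_cases hq : g i q ≤ g i (pm i)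
      · rcases eq_or_ne p q with rfl | hpq
        · exact le_refl _
        · have hτpq : τ xs i p + 0 * g i p ≤ τ xs i q + 0 * g i q := by
            refine cost_le_of_min_segment hΦdiff hΦgrad g 0 hxsF hp ?_
            intro t ht
            have hfeas' : Feasible d (xs + t • dir i p q) :=
              feasible_add_smul_dir hxsF hpq ht
            have hmem : xs + t • dir i p q ∈ S := by
              refine ⟨hfeas', fun j r hr => ?_⟩
              by_cases hj : j = i
              · subst hj
                rcases eq_or_ne r p with rfl | hrp
                · exact hgp
                · rcases eq_or_ne r q with rfl | hrq
                  · exact hq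
                  · have hz : (xs + t • dir j p q) j r = xs j r := by
                      have h0 : dir j p q j r = 0 := by
                        rw [dir_apply_self, Pi.sub_apply, Pi.single_eq_of_ne hrq,
                          Pi.single_eq_of_ne hrp, sub_zero]
                      simp [h0]
                    rw [hz] at hr
                    exact hxsS.2 j r hr
              · have hz : (xs + t • dir i p q) j r = xs j r := by
                  simp [dir_apply_ne hj]
                rw [hz] at hr
                exact hxsS.2 j r hr
            have h1 := hxsmin hmem
            simpa [dir] using h1
          have hgq : g i p ≤ g i q := hgp'.le.trans (hpm i q)
          have : τ xs i p ≤ τ xs i q := by linarith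
          show τ xs i p + lam0 * g i p ≤ τ xs i q + lam0 * g i q
          nlinarith [mul_le_mul_of_nonneg_left hgq hlam0nn]
      · push_neg at hq
        have hglt : g i p < g i q := by rw [hgp']; exact lt_of_le_of_lt (le_refl _) hq
        have htqle : tq ⟨i, (p, q)⟩ ≤ lam0 :=
          le_trans (hM (Set.mem_range_self _)) (le_max_left _ _)
        rw [htq] at htqle
        simp only [if_pos hglt] at htqle
        have hpos : 0 < g i q - g i p := sub_pos.mpr hglt
        rw [div_le_iff₀ hpos] at htqle
        show τ xs i p + lam0 * g i p ≤ τ xs i q + lam0 * g i q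
        nlinarith
    -- the externality bound
    obtain ⟨xb, hxbF, hxbB⟩ := hBfeas
    have hGxs : Gtot g xs ≤ B := by
      have h1 : Gtot g xs = ∑ i, g i (pm i) * d i := by
        unfold Gtot
        refine Finset.sum_congr rfl fun i _ => ?_
        have : ∀ p ∈ Finset.univ, g i p * xs i p = g i (pm i) * xs i p := by
          intro p _
          by_cases hp : xs i p = 0
          · rw [hp]; ring
          · rw [le_antisymm (hxsS.2 i p hp) (hpm i p)]
        rw [Finset.sum_congr rfl this, ← Finset.mul_sum, hxsF.2 i]
      have h2 : ∑ i, g i (pm i) * d i ≤ Gtot g xb := by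
        unfold Gtot
        refine Finset.sum_le_sum fun i _ => ?_
        calc g i (pm i) * d i = ∑ p, g i (pm i) * xb i p := by
              rw [← Finset.mul_sum, hxbF.2 i]
          _ ≤ ∑ p, g i p * xb i p :=
              Finset.sum_le_sum fun p _ =>
                mul_le_mul_of_nonneg_right (hpm i p) (hxbF.1 i p)
      linarith
    exact ⟨lam0, hlam0nn, xs, hWxs, hGxs⟩
  -- Upward closedness
  have hup : ∀ lam ∈ {lam : ℝ | 0 ≤ lam ∧
      ∃ x, IsWardrop d (fun y i p => τ y i p + lam * g i p) x ∧ Gtot g x ≤ B},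
      ∀ lam' : ℝ, lam ≤ lam' →
      lam' ∈ {lam : ℝ | 0 ≤ lam ∧
        ∃ x, IsWardrop d (fun y i p => τ y i p + lam * g i p) x ∧ Gtot g x ≤ B} := by
    rintro lam ⟨hlamnn, x, hWx, hGx⟩ lam' hle
    rcases eq_or_lt_of_le hle with rfl | hlt
    · exact ⟨hlamnn, x, hWx, hGx⟩
    · have hxF : Feasible d x := hWx.1
      obtain ⟨x', hx'F, hx'min⟩ := hFc.exists_isMinOn ⟨x, hxF⟩ (hΨcont lam').continuousOn
      have hmin' : ∀ y, Feasible d y →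
          Φ x' + lam' * Gtot g x' ≤ Φ y + lam' * Gtot g y := fun y hy =>
        hx'min hy
      have hW' : IsWardrop d (fun y i p => τ y i p + lam' * g i p) x' :=
        isWardrop_of_min hΦdiff hΦgrad g lam' hx'F hmin'
      have h1 : Φ x + lam * Gtot g x ≤ Φ x' + lam * Gtot g x' :=
        min_of_isWardrop hΦdiff hΦconv hd hΦgrad g lam hWx x' hx'F
      have h2 : Φ x' + lam' * Gtot g x' ≤ Φ x + lam' * Gtot g x := hmin' x hxF
      have hGle : Gtot g x' ≤ Gtot g x := by nlinarith
      exact ⟨hlamnn.trans hle, x', hW', hGle.trans hGx⟩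
  -- Closedness
  have hclosed : IsClosed {lam : ℝ | 0 ≤ lam ∧
      ∃ x, IsWardrop d (fun y i p => τ y i p + lam * g i p) x ∧ Gtot g x ≤ B} := by
    refine IsSeqClosed.isClosed ?_
    intro u lam hu hcon
    have hlamnn : 0 ≤ lam :=
      ge_of_tendsto hcon (Filter.Eventually.of_forall fun n => (hu n).1)
    choose xseq hWseq hGseq using fun n => (hu n).2
    have hxF : ∀ n, xseq n ∈ {x : ∀ i, P i → ℝ | Feasible d x} := fun n => (hWseq n).1
    obtain ⟨x, hxF', φ, hφmono, hxt⟩ := hFc.tendsto_subseq hxF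
    have hGx : Filter.Tendsto (fun k => Gtot g (xseq (φ k))) Filter.atTop (nhds (Gtot g x)) :=
      ((continuous_Gtot g).continuousAt.tendsto).comp hxt
    have hGB : Gtot g x ≤ B :=
      le_of_tendsto hGx (Filter.Eventually.of_forall fun k => hGseq (φ k))
    have hucomp : Filter.Tendsto (fun k => u (φ k)) Filter.atTop (nhds lam) :=
      hcon.comp hφmono.tendsto_atTop
    have hmin : ∀ y, Feasible d y →
        Φ x + lam * Gtot g x ≤ Φ y + lam * Gtot g y := by
      intro y hy
      have hk : ∀ k, Φ (xseq (φ k)) + u (φ k) * Gtot g (xseq (φ k)) ≤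
          Φ y + u (φ k) * Gtot g y := fun k =>
        min_of_isWardrop hΦdiff hΦconv hd hΦgrad g (u (φ k)) (hWseq (φ k)) y hy
      have hL : Filter.Tendsto (fun k => Φ (xseq (φ k)) + u (φ k) * Gtot g (xseq (φ k)))
          Filter.atTop (nhds (Φ x + lam * Gtot g x)) :=
        ((hΦcont.continuousAt.tendsto).comp hxt).add (hucomp.mul hGx)
      have hR : Filter.Tendsto (fun k => Φ y + u (φ k) * Gtot g y)
          Filter.atTop (nhds (Φ y + lam * Gtot g y)) :=
        tendsto_const_nhds.add (hucomp.mul tendsto_const_nhds)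
      exact le_of_tendsto_of_tendsto' hL hR hk
    exact ⟨hlamnn, x, isWardrop_of_min hΦdiff hΦgrad g lam hxF' hmin, hGB⟩
  refine ⟨hmain, hup, hclosed, ?_⟩
  have hbdd : BddBelow {lam : ℝ | 0 ≤ lam ∧
      ∃ x, IsWardrop d (fun y i p => τ y i p + lam * g i p) x ∧ Gtot g x ≤ B} :=
    ⟨0, fun z hz => hz.1⟩
  exact ⟨_, hclosed.csInf_mem hmain hbdd, fun b hb => csInf_le hbdd hb⟩
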